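/- The map Φ sending f in the trace space of A = ℝ⟨x,y⟩ to the derivation u_f of A defined by u_f(x) = ∂_y^{tr}(f), u_f(y) = −∂_x^{tr}(f) has kernel spanned by tr(1), and its image is exactly the space of symplectic derivations Der_ω(A) = { u ∈ Der(A) : u([x,y]) = 0 }. Hence F(A)/ℝ·tr(1) ≅ Der_ω(A). -/

import Mathlib

noncomputable section
open TensorProduct

abbrev A : Type := FreeAlgebra ℝ (Fin 2)
abbrev B : Type := A ⊗[ℝ] A

def X : A := FreeAlgebra.ι ℝ 0
def Y : A := FreeAlgebra.ι ℝ 1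

/-- Generator matrices used to define the noncommutative partial derivative `pd d`. -/
def genMat (d i : Fin 2) : Matrix (Fin 2) (Fin 2) B :=
  !![(Algebra.TensorProduct.includeLeft : A →ₐ[ℝ] B) (FreeAlgebra.ι ℝ i), if i = d then 1 else 0;
     0, Algebra.TensorProduct.includeRight (FreeAlgebra.ι ℝ i)]

def Φmat (d : Fin 2) : A →ₐ[ℝ] Matrix (Fin 2) (Fin 2) B :=
  FreeAlgebra.lift ℝ (genMat d)

/-- The noncommutative partial derivative `∂_x` (for `d = 0`) resp. `∂_y` (for `d = 1`):
on a monomial it splits the word at each occurrence of the letter `d`. -/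
def pd (d : Fin 2) (a : A) : B := Φmat d a 0 1

/-- The subspace `[A,A]` spanned by commutators; `tr(A) = A/[A,A]` is the trace space. -/
def commSub : Submodule ℝ A := Submodule.span ℝ {p : A | ∃ a b : A, p = a * b - b * a}

/-- The trace projection `tr : A → A/[A,A]`. -/
def trc (a : A) : A ⧸ commSub := Submodule.Quotient.mk a

/-- Reversed multiplication `μ_flip : A ⊗ A → A`, `b ⊗ c ↦ c·b`. -/
def flipMul : B →ₗ[ℝ] A :=
  (LinearMap.mul' ℝ A).comp (TensorProduct.comm ℝ A A).toLinearMap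

-- AUX part (to be inserted before the theorem)

def inl : A →ₐ[ℝ] B := Algebra.TensorProduct.includeLeft
def inr : A →ₐ[ℝ] B := Algebra.TensorProduct.includeRight

lemma Φmat_struct (d : Fin 2) (a : A) :
    Φmat d a 0 0 = inl a ∧ Φmat d a 1 1 = inr a ∧ Φmat d a 1 0 = 0 := by
  induction a using FreeAlgebra.induction with
  | grade0 r =>
    refine ⟨?_, ?_, ?_⟩ <;>
      simp [Φmat, Matrix.algebraMap_matrix_apply, inl, inr, Algebra.TensorProduct.algebraMap_apply]
  | grade1 i =>
    refine ⟨?_, ?_, ?_⟩ <;> simp [Φmat, genMat, inl, inr, FreeAlgebra.lift_ι_apply]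
  | mul x y hx hy =>
    refine ⟨?_, ?_, ?_⟩ <;>
      simp [map_mul, Matrix.mul_apply, Fin.sum_univ_two, hx.1, hx.2.1, hx.2.2, hy.1, hy.2.1, hy.2.2]
  | add x y hx hy =>
    refine ⟨?_, ?_, ?_⟩ <;> simp [map_add, hx.1, hx.2.1, hx.2.2, hy.1, hy.2.1, hy.2.2]

lemma pd_mul (d : Fin 2) (a b : A) :
    pd d (a * b) = inl a * pd d b + pd d a * inr b := by
  have ha := Φmat_struct d a; have hb := Φmat_struct d b
  simp only [pd, map_mul, Matrix.mul_apply, Fin.sum_univ_two, ha.1, hb.2.1]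
  try ring

lemma pd_one (d : Fin 2) : pd d 1 = 0 := by simp [pd]

lemma pd_ι (d i : Fin 2) : pd d (FreeAlgebra.ι ℝ i) = if i = d then 1 else 0 := by
  simp [pd, Φmat, genMat, FreeAlgebra.lift_ι_apply]

lemma flipMul_tmul (p q : A) : flipMul (p ⊗ₜ[ℝ] q) = q * p := by simp [flipMul]

/-- entry (0,1) as a linear map -/
def E01 : Matrix (Fin 2) (Fin 2) B →ₗ[ℝ] B where
  toFun M := M 0 1
  map_add' _ _ := rfl
  map_smul' _ _ := rfl

def pdL (d : Fin 2) : A →ₗ[ℝ] B := E01 ∘ₗ (Φmat d).toLinearMap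

lemma pdL_apply (d : Fin 2) (a : A) : pdL d a = pd d a := rfl

/-- cyclic-derivative-candidate as linear endomorphism -/
def DD (d : Fin 2) : A →ₗ[ℝ] A := flipMul ∘ₗ pdL d

lemma DD_apply (d : Fin 2) (a : A) : DD d a = flipMul (pd d a) := rfl

-- ## the basis of words
def bb : Module.Basis (List (Fin 2)) ℝ A :=
  (FreeAlgebra.basisFreeMonoid ℝ (Fin 2)).reindex (FreeMonoid.toList)

lemma bb_def (l : List (Fin 2)) :
    bb l = FreeAlgebra.equivMonoidAlgebraFreeMonoid.symm
      ((MonoidAlgebra.single (FreeMonoid.ofList l) 1 : MonoidAlgebra ℝ (FreeMonoid (Fin 2)))) := by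
  simp [bb, FreeAlgebra.basisFreeMonoid, Module.Basis.reindex_apply, Module.Basis.map_apply]

lemma bb_nil : bb ([] : List (Fin 2)) = 1 := by
  rw [bb_def]
  have : (MonoidAlgebra.single (FreeMonoid.ofList []) 1 : MonoidAlgebra ℝ (FreeMonoid (Fin 2))) = 1 := rfl
  rw [this, map_one]

lemma bb_append (l1 l2 : List (Fin 2)) : bb (l1 ++ l2) = bb l1 * bb l2 := by
  rw [bb_def, bb_def, bb_def, ← map_mul]
  congr 1
  rw [MonoidAlgebra.single_mul_single, one_mul]
  rfl

lemma bb_single (i : Fin 2) : bb [i] = FreeAlgebra.ι ℝ i := by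
  rw [bb_def]
  have : (MonoidAlgebra.single (FreeMonoid.ofList [i]) 1 : MonoidAlgebra ℝ (FreeMonoid (Fin 2)))
      = MonoidAlgebra.of ℝ (FreeMonoid (Fin 2)) (FreeMonoid.of i) := rfl
  rw [this]
  simp [FreeAlgebra.equivMonoidAlgebraFreeMonoid]

lemma bb_cons (i : Fin 2) (l : List (Fin 2)) : bb (i :: l) = FreeAlgebra.ι ℝ i * bb l := by
  show bb ([i] ++ l) = _
  rw [bb_append, bb_single]

lemma bb_concat (l : List (Fin 2)) (i : Fin 2) : bb (l ++ [i]) = bb l * FreeAlgebra.ι ℝ i := by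
  rw [bb_append, bb_single]

-- ## word formula for pd
lemma pd_bb (d : Fin 2) (w : List (Fin 2)) :
    pd d (bb w) = ∑ k : Fin w.length,
      if w.get k = d then bb (w.take k.1) ⊗ₜ[ℝ] bb (w.drop (k.1+1)) else 0 := by
  induction w with
  | nil => simp [bb_nil, pd_one]
  | cons i t ih =>
    rw [bb_cons, pd_mul, pd_ι, ih]
    simp only [List.length_cons]
    rw [Fin.sum_univ_succ]
    rw [add_comm]
    congr 1
    · simp only [List.get_cons_zero, List.take_zero, bb_nil, List.drop_one, List.tail_cons]
      by_cases h : i = d <;>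
        simp [h, bb_nil, inr, Algebra.TensorProduct.includeRight_apply]
    · simp only [Finset.mul_sum, mul_ite, mul_zero]
      refine Finset.sum_congr rfl fun k _ => ?_
      simp only [List.get_cons_succ, List.take_succ_cons, List.drop_succ_cons]
      by_cases h : t.get k = d <;>
        simp [h, inl, Algebra.TensorProduct.includeLeft_apply,
          Algebra.TensorProduct.tmul_mul_tmul, bb_cons]

lemma DD_bb (d : Fin 2) (w : List (Fin 2)) :
    DD d (bb w) = ∑ k : Fin w.length,
      if w.get k = d then bb (w.drop (k.1+1) ++ w.take k.1) else 0 := by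
  rw [DD_apply, pd_bb, map_sum]
  refine Finset.sum_congr rfl fun k _ => ?_
  split
  · rw [flipMul_tmul, ← bb_append]
  · exact map_zero _
-- ## auxiliary linear maps built on the basis
def trcL : A →ₗ[ℝ] (A ⧸ commSub) := commSub.mkQ

lemma trcL_apply (a : A) : trcL a = trc a := rfl

lemma trc_comm (a b : A) : trc (a * b) = trc (b * a) := by
  rw [trc, trc, Submodule.Quotient.eq]
  exact Submodule.subset_span ⟨a, b, rfl⟩

def eps : A →ₗ[ℝ] ℝ := Module.Basis.constr bb ℝ (fun w => if w = [] then (1:ℝ) else 0)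

def Qm : A →ₗ[ℝ] (A ⧸ commSub) :=
  Module.Basis.constr bb ℝ (fun w => ((w.length : ℝ))⁻¹ • trcL (bb w))

def θm : A →ₗ[ℝ] A :=
  Module.Basis.constr bb ℝ (fun w => ∑ k : Fin w.length, bb (w.drop k.1 ++ w.take k.1))

def lam (d : Fin 2) : A →ₗ[ℝ] A :=
  Module.Basis.constr bb ℝ (fun w => match w with
    | [] => 0
    | i :: t => if i = d then bb t else 0)

def τm : A →ₗ[ℝ] A := Module.Basis.constr bb ℝ (fun w => bb (w.rotate 1))

def πm (m : ℕ) : A →ₗ[ℝ] A :=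
  Module.Basis.constr bb ℝ (fun w => if w.length = m then bb w else 0)

lemma lam_bb_cons (d i : Fin 2) (t : List (Fin 2)) :
    lam d (bb (i :: t)) = if i = d then bb t else 0 := by
  simp [lam, Module.Basis.constr_basis]

lemma lam_mul_ι (d i : Fin 2) (c : A) :
    lam d (FreeAlgebra.ι ℝ i * c) = if i = d then c else 0 := by
  have : (lam d) ∘ₗ (LinearMap.mulLeft ℝ (FreeAlgebra.ι ℝ i))
      = if i = d then (LinearMap.id : A →ₗ[ℝ] A) else 0 := by
    refine Module.Basis.ext bb fun w => ?_
    simp only [LinearMap.comp_apply, LinearMap.mulLeft_apply, ← bb_cons, lam_bb_cons]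
    split <;> simp
  have h := LinearMap.congr_fun this c
  simpa using h.trans (by split <;> simp)

lemma τm_bb (w : List (Fin 2)) : τm (bb w) = bb (w.rotate 1) := by
  simp [τm, Module.Basis.constr_basis]

lemma τm_pow_bb (j : ℕ) (w : List (Fin 2)) : (τm ^ j) (bb w) = bb (w.rotate j) := by
  induction j generalizing w with
  | zero => simp
  | succ n ih =>
    rw [pow_succ, Module.End.mul_apply, τm_bb, ih, List.rotate_rotate, add_comm]

lemma τm_mul_ι (i : Fin 2) (c : A) :
    τm (FreeAlgebra.ι ℝ i * c) = c * FreeAlgebra.ι ℝ i := by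
  have : τm ∘ₗ (LinearMap.mulLeft ℝ (FreeAlgebra.ι ℝ i))
      = (LinearMap.mulRight ℝ (FreeAlgebra.ι ℝ i)) := by
    refine Module.Basis.ext bb fun w => ?_
    simp only [LinearMap.comp_apply, LinearMap.mulLeft_apply, LinearMap.mulRight_apply,
      ← bb_cons, τm_bb]
    rw [List.rotate_cons_succ, List.rotate_zero, bb_concat]
  exact LinearMap.congr_fun this c

lemma πm_bb (m : ℕ) (w : List (Fin 2)) :
    πm m (bb w) = if w.length = m then bb w else 0 := by
  simp [πm, Module.Basis.constr_basis]

lemma πm_comm_τm (m : ℕ) : (πm m) ∘ₗ τm = τm ∘ₗ (πm m) := by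
  refine Module.Basis.ext bb fun w => ?_
  simp only [LinearMap.comp_apply, τm_bb, πm_bb]
  rw [List.length_rotate]
  split <;> simp [τm_bb]

lemma πm_comm_τm_pow (m j : ℕ) (c : A) : (πm m) ((τm ^ j) c) = (τm ^ j) (πm m c) := by
  induction j generalizing c with
  | zero => simp
  | succ n ih =>
    rw [pow_succ, Module.End.mul_apply, Module.End.mul_apply, ih,
      ← LinearMap.comp_apply (πm m) τm, πm_comm_τm, LinearMap.comp_apply]

lemma π0_mul_ι (i : Fin 2) (c : A) : πm 0 (FreeAlgebra.ι ℝ i * c) = 0 := by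
  have : (πm 0) ∘ₗ (LinearMap.mulLeft ℝ (FreeAlgebra.ι ℝ i)) = 0 := by
    refine Module.Basis.ext bb fun w => ?_
    simp only [LinearMap.comp_apply, LinearMap.mulLeft_apply, ← bb_cons, πm_bb]
    simp
  exact LinearMap.congr_fun this c
-- ## the cyclic rotation formula for DD on homogeneous elements
lemma lam_τ_pow_bb (d : Fin 2) (w : List (Fin 2)) (j : ℕ) (hj : j < w.length) :
    lam d ((τm ^ j) (bb w))
      = if w.get ⟨j, hj⟩ = d then bb (w.drop (j+1) ++ w.take j) else 0 := by
  rw [τm_pow_bb, List.rotate_eq_drop_append_take hj.le]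
  have hd : w.drop j = w.get ⟨j, hj⟩ :: w.drop (j+1) := by rw [List.get_eq_getElem, List.getElem_cons_drop]
  rw [hd]
  show lam d (bb (w.get ⟨j, hj⟩ :: (w.drop (j+1) ++ w.take j))) = _
  rw [lam_bb_cons]

lemma DD_πm (d : Fin 2) (m : ℕ) (c : A) :
    DD d (πm m c) = ∑ j : Fin m, lam d ((τm ^ j.1) (πm m c)) := by
  have : (DD d) ∘ₗ (πm m) = (∑ j : Fin m, (lam d) ∘ₗ (τm ^ j.1)) ∘ₗ (πm m) := by
    refine Module.Basis.ext bb fun w => ?_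
    simp only [LinearMap.comp_apply, πm_bb]
    split
    · next h =>
      rw [DD_bb]
      rw [LinearMap.sum_apply]
      subst h
      refine Finset.sum_congr rfl fun j _ => ?_
      rw [LinearMap.comp_apply, lam_τ_pow_bb d w j.1 j.2]
    · simp
  have h := LinearMap.congr_fun this c
  simpa only [LinearMap.comp_apply, LinearMap.sum_apply] using h

lemma DD_πm_fixed (d : Fin 2) (m : ℕ) (c : A) (hc : τm c = c) :
    DD d (πm m c) = m • lam d (πm m c) := by
  rw [DD_πm]
  have hfix : ∀ j : ℕ, (τm ^ j) c = c := by
    intro j; induction j with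
    | zero => rfl
    | succ n ih => rw [pow_succ, Module.End.mul_apply, hc, ih]
  have : ∀ j : Fin m, lam d ((τm ^ j.1) (πm m c)) = lam d (πm m c) := by
    intro j
    rw [← πm_comm_τm_pow, hfix]
  rw [Finset.sum_congr rfl (fun j _ => this j)]
  simp

-- ## θ identity : θ c = X * DD 0 c + Y * DD 1 c
lemma θm_eq (c : A) : θm c = X * DD 0 c + Y * DD 1 c := by
  have : θm = (LinearMap.mulLeft ℝ X) ∘ₗ (DD 0) + (LinearMap.mulLeft ℝ Y) ∘ₗ (DD 1) := by
    refine Module.Basis.ext bb fun w => ?_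
    simp only [LinearMap.add_apply, LinearMap.comp_apply, LinearMap.mulLeft_apply, DD_bb,
      θm, Module.Basis.constr_basis]
    rw [Finset.mul_sum, Finset.mul_sum, ← Finset.sum_add_distrib]
    refine Finset.sum_congr rfl fun k _ => ?_
    have hd : w.drop k.1 = w.get k :: w.drop (k.1+1) := by rw [List.get_eq_getElem, List.getElem_cons_drop]
    rw [hd, List.cons_append, bb_cons]
    have : ∀ g : Fin 2,
        X * (if g = 0 then bb (w.drop (k.1+1) ++ w.take k.1) else 0)
        + Y * (if g = 1 then bb (w.drop (k.1+1) ++ w.take k.1) else 0)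
        = FreeAlgebra.ι ℝ g * bb (w.drop (k.1+1) ++ w.take k.1) := by
      intro g
      fin_cases g <;> simp [X, Y]
    exact (this (w.get k)).symm
  rw [this]
  rfl

-- ## Qm ∘ θm
lemma Qm_θm (c : A) : Qm (θm c) = trcL c - eps c • trcL 1 := by
  have : Qm ∘ₗ θm = trcL - (eps.smulRight (trcL 1)) := by
    refine Module.Basis.ext bb fun w => ?_
    simp only [LinearMap.comp_apply, LinearMap.sub_apply, LinearMap.smulRight_apply,
      θm, eps, Module.Basis.constr_basis, map_sum]
    rcases Nat.eq_zero_or_pos w.length with h0 | hpos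
    · rw [List.length_eq_zero_iff.mp h0]
      simp [bb_nil]
    · have hne : w ≠ [] := by
        intro h; rw [h] at hpos; simp at hpos
      rw [if_neg hne]
      have hterm : ∀ k : Fin w.length,
          Qm (bb (w.drop k.1 ++ w.take k.1)) = ((w.length : ℝ))⁻¹ • trcL (bb w) := by
        intro k
        have hlen : (w.drop k.1 ++ w.take k.1).length = w.length := by
          simp only [List.length_append, List.length_drop, List.length_take]
          omega
        rw [Qm, Module.Basis.constr_basis, hlen]
        congr 1
        show trc _ = trc _
        rw [bb_append, trc_comm, ← bb_append, List.take_append_drop]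
      rw [Finset.sum_congr rfl (fun k _ => hterm k)]
      rw [Finset.sum_const, Finset.card_univ, Fintype.card_fin]
      rw [zero_smul, sub_zero]
      rw [← Nat.cast_smul_eq_nsmul ℝ, smul_smul]
      rw [mul_inv_cancel₀ (by exact_mod_cast hpos.ne' : (w.length : ℝ) ≠ 0), one_smul]
  have h := LinearMap.congr_fun this c
  simpa only [LinearMap.comp_apply, LinearMap.sub_apply, LinearMap.smulRight_apply] using h
-- ## key commutator identity (Part 2)
lemma keyK (c : A) :
    DD 0 c * X - X * DD 0 c + (DD 1 c * Y - Y * DD 1 c) = 0 := by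
  have : (LinearMap.mulRight ℝ X) ∘ₗ (DD 0) - (LinearMap.mulLeft ℝ X) ∘ₗ (DD 0)
      + ((LinearMap.mulRight ℝ Y) ∘ₗ (DD 1) - (LinearMap.mulLeft ℝ Y) ∘ₗ (DD 1))
      = (0 : A →ₗ[ℝ] A) := by
    refine Module.Basis.ext bb fun w => ?_
    simp only [LinearMap.add_apply, LinearMap.sub_apply, LinearMap.comp_apply,
      LinearMap.mulLeft_apply, LinearMap.mulRight_apply, LinearMap.zero_apply, DD_bb]
    rw [Finset.sum_mul, Finset.mul_sum, Finset.sum_mul, Finset.mul_sum,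
      ← Finset.sum_sub_distrib, ← Finset.sum_sub_distrib, ← Finset.sum_add_distrib]
    have hterm : ∀ k : Fin w.length,
        ((if w.get k = 0 then bb (w.drop (k.1+1) ++ w.take k.1) else 0) * X
          - X * (if w.get k = 0 then bb (w.drop (k.1+1) ++ w.take k.1) else 0))
        + ((if w.get k = 1 then bb (w.drop (k.1+1) ++ w.take k.1) else 0) * Y
          - Y * (if w.get k = 1 then bb (w.drop (k.1+1) ++ w.take k.1) else 0))
        = bb (w.drop (k.1+1) ++ w.take (k.1+1)) - bb (w.drop k.1 ++ w.take k.1) := by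
      intro k
      have h1 : ∀ g : Fin 2,
          ((if g = 0 then bb (w.drop (k.1+1) ++ w.take k.1) else 0) * X
            - X * (if g = 0 then bb (w.drop (k.1+1) ++ w.take k.1) else 0))
          + ((if g = 1 then bb (w.drop (k.1+1) ++ w.take k.1) else 0) * Y
            - Y * (if g = 1 then bb (w.drop (k.1+1) ++ w.take k.1) else 0))
          = bb (w.drop (k.1+1) ++ w.take k.1) * FreeAlgebra.ι ℝ g
            - FreeAlgebra.ι ℝ g * bb (w.drop (k.1+1) ++ w.take k.1) := by
        intro g; fin_cases g <;> simp [X, Y]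
      rw [h1 (w.get k)]
      congr 1
      · rw [← bb_concat, List.append_assoc]
        congr 2
        rw [List.get_eq_getElem, List.take_concat_get']
      · rw [← bb_cons, ← List.cons_append]
        congr 2
        rw [List.get_eq_getElem, List.getElem_cons_drop]
    rw [Finset.sum_congr rfl (fun k _ => hterm k)]
    have := Fin.sum_univ_eq_sum_range
      (fun k => bb (w.drop (k+1) ++ w.take (k+1)) - bb (w.drop k ++ w.take k)) w.length
    rw [this, Finset.sum_range_sub (fun j => bb (w.drop j ++ w.take j))]
    simp
  have h := LinearMap.congr_fun this c
  simpa only [LinearMap.add_apply, LinearMap.sub_apply, LinearMap.comp_apply,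
    LinearMap.mulLeft_apply, LinearMap.mulRight_apply, LinearMap.zero_apply] using h

-- ## finite homogeneous decomposition
lemma decomp (c : A) : ∃ N : ℕ, ∑ m ∈ Finset.range N, πm m c = c := by
  classical
  set s := (bb.repr c).support with hs
  refine ⟨s.sup List.length + 1, ?_⟩
  have hc : ∑ w ∈ s, bb.repr c w • bb w = c := by
    conv_rhs => rw [← bb.linearCombination_repr c]
    rw [Finsupp.linearCombination_apply, Finsupp.sum]
  calc ∑ m ∈ Finset.range (s.sup List.length + 1), πm m c
      = ∑ m ∈ Finset.range (s.sup List.length + 1), ∑ w ∈ s, bb.repr c w • πm m (bb w) := by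
        refine Finset.sum_congr rfl fun m _ => ?_
        conv_lhs => rw [← hc]
        rw [map_sum]
        exact Finset.sum_congr rfl fun w _ => map_smul _ _ _
    _ = ∑ w ∈ s, ∑ m ∈ Finset.range (s.sup List.length + 1), bb.repr c w • πm m (bb w) := by
        rw [Finset.sum_comm]
    _ = ∑ w ∈ s, bb.repr c w • bb w := by
        refine Finset.sum_congr rfl fun w hw => ?_
        rw [← Finset.smul_sum]
        congr 1
        have hwN : w.length ∈ Finset.range (s.sup List.length + 1) :=
          Finset.mem_range.mpr (Nat.lt_succ_of_le (Finset.le_sup hw))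
        calc ∑ m ∈ Finset.range (s.sup List.length + 1), πm m (bb w)
            = ∑ m ∈ Finset.range (s.sup List.length + 1), if w.length = m then bb w else 0 :=
              Finset.sum_congr rfl fun m _ => πm_bb m w
          _ = bb w := by rw [Finset.sum_ite_eq]; simp [hwN]
    _ = c := hc

-- ## generic derivations on A
def derMat (v : Fin 2 → A) : A →ₐ[ℝ] Matrix (Fin 2) (Fin 2) A :=
  FreeAlgebra.lift ℝ (fun i => !![FreeAlgebra.ι ℝ i, v i; 0, FreeAlgebra.ι ℝ i])

def derFun (v : Fin 2 → A) (a : A) : A := derMat v a 0 1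

lemma derMat_struct (v : Fin 2 → A) (a : A) :
    derMat v a 0 0 = a ∧ derMat v a 1 1 = a ∧ derMat v a 1 0 = 0 := by
  induction a using FreeAlgebra.induction with
  | grade0 r =>
    refine ⟨?_, ?_, ?_⟩ <;> simp [derMat, Matrix.algebraMap_matrix_apply]
  | grade1 i =>
    refine ⟨?_, ?_, ?_⟩ <;> simp [derMat, FreeAlgebra.lift_ι_apply]
  | mul x y hx hy =>
    refine ⟨?_, ?_, ?_⟩ <;>
      simp [map_mul, Matrix.mul_apply, Fin.sum_univ_two, hx.1, hx.2.1, hx.2.2, hy.1, hy.2.1, hy.2.2]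
  | add x y hx hy =>
    refine ⟨?_, ?_, ?_⟩ <;> simp [map_add, hx.1, hx.2.1, hx.2.2, hy.1, hy.2.1, hy.2.2]

def der (v : Fin 2 → A) : A →ₗ[ℝ] A :=
  { toFun := derFun v
    map_add' := fun a b => by simp [derFun, map_add]
    map_smul' := fun r a => by simp [derFun, map_smul] }

lemma der_mul (v : Fin 2 → A) (a b : A) :
    der v (a * b) = der v a * b + a * der v b := by
  have ha := derMat_struct v a; have hb := derMat_struct v b
  show derFun v (a*b) = _
  simp only [derFun, map_mul, Matrix.mul_apply, Fin.sum_univ_two, ha.1, hb.2.1]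
  show _ = derFun v a * b + a * derFun v b
  simp only [derFun]
  exact add_comm _ _

lemma der_ι (v : Fin 2 → A) (i : Fin 2) : der v (FreeAlgebra.ι ℝ i) = v i := by
  show derFun v _ = _
  simp [derFun, derMat, FreeAlgebra.lift_ι_apply]

/-- `Φ` sends a cyclic word `f` to the derivation `u_f` with `u_f(x) = ∂_y^{tr}(f)`,
`u_f(y) = −∂_x^{tr}(f)`.  Its kernel is spanned by `tr(1)`, and its image is exactly
the set of symplectic derivations `Der_ω(A) = {u : u([x,y]) = 0}`.  Here `Dx, Dy`
denote the cyclic partial derivatives on the trace space, and a derivation is recorded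
by its (generator-determining) values; `u_f = 0` iff `u_f(x) = u_f(y) = 0`. -/
theorem Phi_kernel_and_image
    (Dx Dy : (A ⧸ commSub) →ₗ[ℝ] A)
    (hDx : ∀ a : A, Dx (trc a) = flipMul (pd 0 a))
    (hDy : ∀ a : A, Dy (trc a) = flipMul (pd 1 a)) :
    -- the kernel of Φ is spanned by tr(1)
    (∀ f : A ⧸ commSub, (Dy f = 0 ∧ Dx f = 0) ↔ ∃ r : ℝ, f = r • trc 1) ∧
    -- Φ(f) extends to a derivation of A annihilating ω = [x,y]
    (∀ f : A ⧸ commSub, ∃ u : A →ₗ[ℝ] A,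
      (∀ a b : A, u (a * b) = u a * b + a * u b) ∧
      u X = Dy f ∧ u Y = -(Dx f) ∧ u (X * Y - Y * X) = 0) ∧
    -- every symplectic derivation is Φ(f) for some cyclic word f
    (∀ u : A →ₗ[ℝ] A, (∀ a b : A, u (a * b) = u a * b + a * u b) →
      u (X * Y - Y * X) = 0 → ∃ f : A ⧸ commSub, u X = Dy f ∧ u Y = -(Dx f)) := by

  refine ⟨?_, ?_, ?_⟩
  · -- kernel
    intro f
    constructor
    · rintro ⟨hy, hx⟩
      obtain ⟨a, rfl⟩ := Submodule.Quotient.mk_surjective commSub f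
      have hx' : DD 0 a = 0 := by
        have h : Dx (Submodule.Quotient.mk a) = flipMul (pd 0 a) := hDx a
        rw [DD_apply, ← h, hx]
      have hy' : DD 1 a = 0 := by
        have h : Dy (Submodule.Quotient.mk a) = flipMul (pd 1 a) := hDy a
        rw [DD_apply, ← h, hy]
      have hθ : θm a = 0 := by rw [θm_eq, hx', hy']; simp
      have hQ := Qm_θm a
      rw [hθ, map_zero] at hQ
      refine ⟨eps a, ?_⟩
      have h2 : trcL a = eps a • trcL 1 := by
        have := sub_eq_zero.mp hQ.symm
        exact this
      exact h2
    · rintro ⟨r, rfl⟩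
      constructor
      · have h : Dy (trc (1:A)) = flipMul (pd 1 1) := hDy 1
        rw [map_smul, h, pd_one, map_zero, smul_zero]
      · have h : Dx (trc (1:A)) = flipMul (pd 0 1) := hDx 1
        rw [map_smul, h, pd_one, map_zero, smul_zero]
  · -- image : every Φ(f) is a symplectic derivation
    intro f
    obtain ⟨a, rfl⟩ := Submodule.Quotient.mk_surjective commSub f
    set v : Fin 2 → A := ![Dy (Submodule.Quotient.mk a), -(Dx (Submodule.Quotient.mk a))] with hv
    have e0 : der v X = Dy (Submodule.Quotient.mk a) := by
      have := der_ι v 0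
      rw [hv] at this
      exact this.trans (by simp)
    have e1 : der v Y = -(Dx (Submodule.Quotient.mk a)) := by
      have := der_ι v 1
      rw [hv] at this
      exact this.trans (by simp)
    refine ⟨der v, der_mul v, e0, e1, ?_⟩
    have hp : Dy (Submodule.Quotient.mk a) = DD 1 a := hDy a
    have hq : Dx (Submodule.Quotient.mk a) = DD 0 a := hDx a
    rw [map_sub, der_mul, der_mul, e0, e1, hp, hq]
    have h := keyK a
    rw [mul_neg, neg_mul]
    rw [← h]
    abel
  · -- surjectivity onto symplectic derivations
    intro u hu hω
    set p := u X with hp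
    set q := u Y with hq
    have hC := hω
    rw [map_sub, hu X Y, hu Y X] at hC
    set ζ := Y * p - X * q with hζ
    have hτζ : τm ζ = ζ := by
      rw [hζ, map_sub]
      have t1 : τm (Y * p) = p * Y := τm_mul_ι 1 p
      have t2 : τm (X * q) = q * X := τm_mul_ι 0 q
      rw [t1, t2]
      refine sub_eq_sub_iff_add_eq_add.mpr ?_
      have h2 := sub_eq_zero.mp hC
      calc p * Y + X * q = q * X + Y * p := h2
        _ = Y * p + q * X := add_comm _ _
    obtain ⟨N, hN⟩ := decomp ζ
    set a := ∑ m ∈ Finset.range N, ((m:ℝ))⁻¹ • πm m ζ with ha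
    have hπ0 : πm 0 ζ = 0 := by
      rw [hζ, map_sub]
      have h1 : πm 0 (Y * p) = 0 := π0_mul_ι 1 p
      have h2 : πm 0 (X * q) = 0 := π0_mul_ι 0 q
      rw [h1, h2, sub_zero]
    have hDDa : ∀ d, DD d a = lam d ζ := by
      intro d
      rw [ha, map_sum]
      have hterm : ∀ m : ℕ, DD d (((m:ℝ))⁻¹ • πm m ζ) = lam d (πm m ζ) := by
        intro m
        rw [map_smul, DD_πm_fixed d m ζ hτζ]
        rcases Nat.eq_zero_or_pos m with h0 | hpos
        · subst h0
          rw [hπ0]; simp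
        · rw [← Nat.cast_smul_eq_nsmul ℝ, smul_smul,
            inv_mul_cancel₀ (by exact_mod_cast hpos.ne' : (m:ℝ) ≠ 0), one_smul]
      rw [Finset.sum_congr rfl (fun m _ => hterm m), ← map_sum, hN]
    have hl0 : lam 0 ζ = -q := by
      rw [hζ, map_sub]
      have h1 : lam 0 (Y * p) = if (1 : Fin 2) = 0 then p else 0 := lam_mul_ι 0 1 p
      have h2 : lam 0 (X * q) = if (0 : Fin 2) = 0 then q else 0 := lam_mul_ι 0 0 q
      rw [h1, h2]
      norm_num
    have hl1 : lam 1 ζ = p := by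
      rw [hζ, map_sub]
      have h1 : lam 1 (Y * p) = if (1 : Fin 2) = 1 then p else 0 := lam_mul_ι 1 1 p
      have h2 : lam 1 (X * q) = if (0 : Fin 2) = 1 then q else 0 := lam_mul_ι 1 0 q
      rw [h1, h2]
      norm_num
    refine ⟨Submodule.Quotient.mk a, ?_, ?_⟩
    · have h : Dy (Submodule.Quotient.mk a) = flipMul (pd 1 a) := hDy a
      rw [h]
      have : flipMul (pd 1 a) = DD 1 a := rfl
      rw [this, hDDa 1, hl1]
    · have h : Dx (Submodule.Quotient.mk a) = flipMul (pd 0 a) := hDx a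
      rw [h]
      have : flipMul (pd 0 a) = DD 0 a := rfl
      rw [this, hDDa 0, hl0, neg_neg]
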